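/- Let q = p^e be a prime power, r an integer, and w ≥ 2 with gcd(w, q^r - 1) = 1, gcd(r, w!) = 1, and w not a power of p. Let F = F_{q^r}. If l, m, n are nonzero elements of F representing three distinct points of PG(r-1, F_q) that are F_q-linearly dependent, then l^w, m^w, n^w are not F_q-linearly dependent (as representatives of distinct points). -/

import Mathlib

open Polynomial
lemma aux_not_dvd_choose (p : ℕ) (hp : p.Prime) :
    ∀ v w : ℕ, w ≠ 0 → p ^ v ∣ w → ¬ p ^ (v + 1) ∣ w → ¬ p ∣ w.choose (p ^ v) := by
  haveI : Fact p.Prime := ⟨hp⟩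
  intro v
  induction v with
  | zero =>
    intro w hw h1 h2 hdvd
    simp only [pow_zero, Nat.choose_one_right] at hdvd
    exact h2 (by simpa using hdvd)
  | succ v ih =>
    intro w hw h1 h2 hdvd
    have hpw : p ∣ w := (dvd_pow_self p (Nat.succ_ne_zero v)).trans h1
    have hmod := Choose.choose_modEq_choose_mod_mul_choose_div_nat (p := p) (n := w)
      (k := p ^ (v + 1))
    have hwp : w % p = 0 := Nat.mod_eq_zero_of_dvd hpw
    have hkp : p ^ (v + 1) % p = 0 := Nat.mod_eq_zero_of_dvd (dvd_pow_self p (Nat.succ_ne_zero v))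
    have hkd : p ^ (v + 1) / p = p ^ v := by
      rw [pow_succ, Nat.mul_div_cancel _ hp.pos]
    rw [hwp, hkp, hkd, Nat.choose_zero_right, one_mul] at hmod
    have hdvd' : p ∣ (w / p).choose (p ^ v) :=
      (Nat.modEq_zero_iff_dvd).mp (hmod.symm.trans ((Nat.modEq_zero_iff_dvd).mpr hdvd))
    refine ih (w / p) ?_ ?_ ?_ hdvd'
    · exact Nat.div_ne_zero_iff_of_dvd hpw |>.mpr ⟨hw, hp.ne_zero⟩
    · exact (Nat.dvd_div_iff_mul_dvd hpw).mpr (by rwa [← pow_succ'] )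
    · intro hcon
      have h3 := (Nat.dvd_div_iff_mul_dvd hpw).mp hcon
      exact h2 (by rw [show p ^ (v + 1 + 1) = p * p ^ (v + 1) by ring]; exact h3)

lemma aux_exists_choose (p w : ℕ) (hp : p.Prime) (hw : 2 ≤ w) (h3 : ¬∃ i : ℕ, w = p ^ i) :
    ∃ k : ℕ, 0 < k ∧ k < w ∧ ¬ p ∣ w.choose k := by
  have hw0 : w ≠ 0 := by omega
  refine ⟨p ^ (w.factorization p), pow_pos hp.pos _, ?_,
    aux_not_dvd_choose p hp _ w hw0 (Nat.ordProj_dvd w p)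
      (Nat.pow_succ_factorization_not_dvd hw0 hp)⟩
  rcases lt_or_eq_of_le (Nat.le_of_dvd (by omega) (Nat.ordProj_dvd w p)) with h | h
  · exact h
  · exact absurd ⟨_, h.symm⟩ h3

lemma aux_pow_bij (A : Type*) [Field A] [Fintype A] (w : ℕ) (hw : w ≠ 0)
    (h : Nat.Coprime w (Fintype.card A - 1)) : Function.Bijective (fun x : A => x ^ w) := by
  rw [Finite.injective_iff_bijective.symm]
  intro x y hxy
  simp only at hxy
  rcases eq_or_ne y 0 with rfl | hy
  · rw [zero_pow hw] at hxy
    exact pow_eq_zero_iff hw |>.mp hxy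
  · have hx : x ≠ 0 := by
      intro h0; rw [h0, zero_pow hw] at hxy
      exact hy (pow_eq_zero_iff hw |>.mp hxy.symm)
    classical
    have hcop : (Nat.card Aˣ).Coprime w := by
      rw [Nat.card_eq_fintype_card, Fintype.card_units]
      exact h.symm
    have := (powCoprime hcop).injective (a₁ := Units.mk0 x hx) (a₂ := Units.mk0 y hy)
      (Units.ext (by simpa using hxy))
    simpa using congrArg Units.val this

lemma aux_prop {K F : Type*} [Field K] [Field F] [Algebra K F] {a b : K} {u v : F}
    (hu : u ≠ 0) (hv : v ≠ 0) (hab : a ≠ 0 ∨ b ≠ 0) (h : a • u + b • v = 0) :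
    ∃ c : K, v = c • u := by
  have hb : b ≠ 0 := by
    rintro rfl
    rw [zero_smul, add_zero] at h
    rcases hab with ha | hb'
    · exact ha (by
        rcases smul_eq_zero.mp h with h' | h'
        · exact h'
        · exact absurd h' hu)
    · exact hb' rfl
  refine ⟨-(b⁻¹ * a), ?_⟩
  have h1 : b • v = -(a • u) := by
    rw [eq_neg_iff_add_eq_zero, add_comm]; exact h
  calc v = b⁻¹ • (b • v) := (inv_smul_smul₀ hb v).symm
  _ = b⁻¹ • (-(a • u)) := by rw [h1]
  _ = -(b⁻¹ * a) • u := by rw [smul_neg, smul_smul, neg_smul]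

lemma aux_pow_smul {K F : Type*} [Field K] [Fintype K] [Field F] [Fintype F] [Algebra K F]
    (w : ℕ) (hw : w ≠ 0) (hF : Nat.Coprime w (Fintype.card F - 1))
    (hK : Nat.Coprime w (Fintype.card K - 1))
    {u v : F} {c : K} (h : v ^ w = c • u ^ w) : ∃ s : K, v = s • u := by
  obtain ⟨s, hs⟩ := (aux_pow_bij K w hw hK).surjective c
  refine ⟨s, (aux_pow_bij F w hw hF).injective ?_⟩
  show v ^ w = (s • u) ^ w
  rw [h, _root_.smul_pow, ← hs]

lemma aux_solve {K F : Type*} [Field K] [Field F] [Algebra K F] {a b c : K} {u v t : F}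
    (ha : a ≠ 0) (h : a • u + b • v + c • t = 0) :
    u = (-(a⁻¹ * b)) • v + (-(a⁻¹ * c)) • t := by
  have h1 : a • u = -(b • v + c • t) := by
    rw [eq_neg_iff_add_eq_zero, ← add_assoc]
    exact h
  calc u = a⁻¹ • (a • u) := (inv_smul_smul₀ ha u).symm
  _ = a⁻¹ • (-(b • v + c • t)) := by rw [h1]
  _ = (-(a⁻¹ * b)) • v + (-(a⁻¹ * c)) • t := by
      rw [smul_neg, smul_add, smul_smul, smul_smul, neg_add, neg_smul, neg_smul]

theorem stmt_8 (p e : ℕ) (hp : p.Prime) (he : 1 ≤ e)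
    (K F : Type*) [Field K] [Fintype K] [Field F] [Algebra K F]
    (hq : Fintype.card K = p ^ e)
    (r w : ℕ) (hw : 2 ≤ w)
    (hw1 : Nat.Coprime w ((p ^ e) ^ r - 1))
    (hw2 : Nat.Coprime r (Nat.factorial w))
    (hw3 : ¬ ∃ i : ℕ, w = p ^ i)
    (hdim : Module.finrank K F = r)
    (l m n : F) (hl : l ≠ 0) (hm : m ≠ 0) (hn : n ≠ 0)
    (hlm : ∀ c : K, m ≠ c • l) (hln : ∀ c : K, n ≠ c • l) (hmn : ∀ c : K, n ≠ c • m)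
    (hdep : ¬ LinearIndependent K ![l, m, n]) :
    LinearIndependent K ![l ^ w, m ^ w, n ^ w] := by
  have hwne : w ≠ 0 := by omega
  have hr0 : r ≠ 0 := by
    rintro rfl
    rw [Nat.coprime_zero_left] at hw2
    have h1 := Nat.self_le_factorial w
    omega
  haveI : FiniteDimensional K F :=
    FiniteDimensional.of_finrank_pos (hdim ▸ Nat.pos_of_ne_zero hr0)
  haveI : Finite F := Module.finite_of_finite K
  haveI : Fintype F := Fintype.ofFinite F
  have hcardF : Fintype.card F = (p ^ e) ^ r := by
    rw [Module.card_eq_pow_finrank (K := K) (V := F), hq, hdim]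
  have hFcop : Nat.Coprime w (Fintype.card F - 1) := by rw [hcardF]; exact hw1
  have hKcop : Nat.Coprime w (Fintype.card K - 1) := by
    refine Nat.Coprime.coprime_dvd_right ?_ hFcop
    rw [hcardF, hq]
    simpa using Nat.sub_dvd_pow_sub_pow (p ^ e) 1 r
  -- characteristic of K is p
  haveI hcharP : CharP K p := by
    haveI := ringChar.charP K
    have h0 : ((p ^ e : ℕ) : K) = 0 := by
      rw [← hq]; exact FiniteField.cast_card_eq_zero K
    have hdvd : ringChar K ∣ p ^ e := ringChar.dvd h0
    have hprime : (ringChar K).Prime := CharP.char_is_prime K (ringChar K)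
    have heq : ringChar K = p :=
      (Nat.prime_dvd_prime_iff_eq hprime hp).mp (hprime.dvd_of_dvd_pow hdvd)
    rw [← heq]
    exact ringChar.charP K
  have hinj : Function.Injective (algebraMap K F) := (algebraMap K F).injective
  -- degree-one relation
  obtain ⟨g, hg, i0, hi0⟩ := Fintype.not_linearIndependent_iff.mp hdep
  rw [Fin.sum_univ_three] at hg
  simp only [Matrix.cons_val_zero, Matrix.cons_val_one, Matrix.head_cons, Matrix.cons_val_two,
    Matrix.tail_cons] at hg
  have hg0 : g 0 ≠ 0 := by
    intro h0
    rw [h0, zero_smul, zero_add] at hg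
    have hor : g 1 ≠ 0 ∨ g 2 ≠ 0 := by
      fin_cases i0
      · exact absurd h0 hi0
      · exact Or.inl hi0
      · exact Or.inr hi0
    obtain ⟨c, hc⟩ := aux_prop hm hn hor hg
    exact hmn c hc
  have hg1 : g 1 ≠ 0 := by
    intro h1
    rw [h1, zero_smul, add_zero] at hg
    obtain ⟨c, hc⟩ := aux_prop hl hn (Or.inl hg0) hg
    exact hln c hc
  have hg2 : g 2 ≠ 0 := by
    intro h2
    rw [h2, zero_smul] at hg
    rw [add_zero] at hg
    obtain ⟨c, hc⟩ := aux_prop hl hm (Or.inl hg0) hg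
    exact hlm c hc
  have hrel1 := aux_solve hg0 hg
  set b : K := -((g 0)⁻¹ * g 1) with hb_def
  set c : K := -((g 0)⁻¹ * g 2) with hc_def
  have hb : b ≠ 0 := by
    simp only [hb_def, neg_ne_zero, mul_ne_zero_iff]
    exact ⟨inv_ne_zero hg0, hg1⟩
  have hc : c ≠ 0 := by
    simp only [hc_def, neg_ne_zero, mul_ne_zero_iff]
    exact ⟨inv_ne_zero hg0, hg2⟩
  -- suppose the power relation is dependent
  by_contra hind
  obtain ⟨h, hh, j0, hj0⟩ := Fintype.not_linearIndependent_iff.mp hind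
  rw [Fin.sum_univ_three] at hh
  simp only [Matrix.cons_val_zero, Matrix.cons_val_one, Matrix.head_cons, Matrix.cons_val_two,
    Matrix.tail_cons] at hh
  have hh0 : h 0 ≠ 0 := by
    intro h0
    rw [h0, zero_smul, zero_add] at hh
    have hor : h 1 ≠ 0 ∨ h 2 ≠ 0 := by
      fin_cases j0
      · exact absurd h0 hj0
      · exact Or.inl hj0
      · exact Or.inr hj0
    obtain ⟨c', hc'⟩ := aux_prop (pow_ne_zero w hm) (pow_ne_zero w hn) hor hh
    obtain ⟨s, hs⟩ := aux_pow_smul w hwne hFcop hKcop hc'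
    exact hmn s hs
  have hh1 : h 1 ≠ 0 := by
    intro h1
    rw [h1, zero_smul, add_zero] at hh
    obtain ⟨c', hc'⟩ := aux_prop (pow_ne_zero w hl) (pow_ne_zero w hn) (Or.inl hh0) hh
    obtain ⟨s, hs⟩ := aux_pow_smul w hwne hFcop hKcop hc'
    exact hln s hs
  have hh2 : h 2 ≠ 0 := by
    intro h2
    rw [h2, zero_smul, add_zero] at hh
    obtain ⟨c', hc'⟩ := aux_prop (pow_ne_zero w hl) (pow_ne_zero w hm) (Or.inl hh0) hh
    obtain ⟨s, hs⟩ := aux_pow_smul w hwne hFcop hKcop hc'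
    exact hlm s hs
  have hrel2 := aux_solve hh0 hh
  set ee : K := -((h 0)⁻¹ * h 1) with hee_def
  set f : K := -((h 0)⁻¹ * h 2) with hf_def
  have hee : ee ≠ 0 := by
    simp only [hee_def, neg_ne_zero, mul_ne_zero_iff]
    exact ⟨inv_ne_zero hh0, hh1⟩
  have hf : f ≠ 0 := by
    simp only [hf_def, neg_ne_zero, mul_ne_zero_iff]
    exact ⟨inv_ne_zero hh0, hh2⟩
  -- pass to F-equations
  set B : F := algebraMap K F b with hB_def
  set Cc : F := algebraMap K F c with hCc_def
  set E : F := algebraMap K F ee with hE_def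
  set Ff : F := algebraMap K F f with hFf_def
  have hrel1' : l = B * m + Cc * n := by
    rw [hrel1, Algebra.smul_def, Algebra.smul_def]
  have hrel2' : l ^ w = E * m ^ w + Ff * n ^ w := by
    rw [hrel2, Algebra.smul_def, Algebra.smul_def]
  set x : F := m * n⁻¹ with hx_def
  have hkey : (B * x + Cc) ^ w = E * x ^ w + Ff := by
    have hx1 : B * x + Cc = l * n⁻¹ := by
      field_simp [hx_def]
      linear_combination hrel1'.symm + B * m * mul_inv_cancel₀ hn
    have hx2 : E * x ^ w + Ff = l ^ w * (n ^ w)⁻¹ := by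
      rw [hx_def]
      field_simp
      have hnw : n ^ w * n⁻¹ ^ w = 1 := by rw [← mul_pow, mul_inv_cancel₀ hn, one_pow]
      linear_combination hrel2'.symm + E * m ^ w * hnw
    rw [hx1, hx2, mul_pow, inv_pow]
  -- the polynomial
  set P : K[X] := (C b * X + C c) ^ w - (C ee * X ^ w + C f) with hP_def
  have hP0 : aeval x P = 0 := by
    simp only [hP_def, map_sub, map_add, map_mul, map_pow, aeval_X, aeval_C]
    rw [← hB_def, ← hCc_def, ← hE_def, ← hFf_def, hkey, sub_self]
  obtain ⟨k, hk0, hkw, hkchoose⟩ := aux_exists_choose p w hp hw hw3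
  have hPne : P ≠ 0 := by
    intro hP
    have hcoeff : P.coeff k = b ^ w * ((b⁻¹ * c) ^ (w - k) * (w.choose k : K)) := by
      have hfac : C b * X + C c = C b * (X + C (b⁻¹ * c)) := by
        rw [mul_add, ← C_mul, ← mul_assoc, mul_inv_cancel₀ hb, one_mul]
      rw [hP_def, coeff_sub, hfac, mul_pow, ← C_pow, coeff_C_mul, coeff_X_add_C_pow,
        coeff_add, coeff_C_mul, coeff_X_pow, coeff_C]
      simp [hk0.ne', hkw.ne]
    rw [hP] at hcoeff
    simp only [coeff_zero] at hcoeff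
    have hchoose0 : (w.choose k : K) ≠ 0 := by
      rw [Ne, CharP.cast_eq_zero_iff K p]
      exact hkchoose
    exact (mul_ne_zero (pow_ne_zero _ hb)
      (mul_ne_zero (pow_ne_zero _ (mul_ne_zero (inv_ne_zero hb) hc)) hchoose0)) hcoeff.symm
  have hdegP : P.natDegree ≤ w := by
    rw [hP_def]
    compute_degree
  -- x is not in K
  have hxnot : x ∉ (algebraMap K F).range := by
    rintro ⟨s, hs⟩
    have hxne : x ≠ 0 := mul_ne_zero hm (inv_ne_zero hn)
    have hs0 : s ≠ 0 := by
      rintro rfl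
      rw [map_zero] at hs
      exact hxne hs.symm
    refine hmn s⁻¹ ?_
    rw [Algebra.smul_def, map_inv₀, hs, hx_def]
    field_simp
  -- minimal polynomial argument
  have hint : IsIntegral K x := IsIntegral.of_finite K x
  have hdvdP : minpoly K x ∣ P := minpoly.dvd K x hP0
  have hdle : (minpoly K x).natDegree ≤ w :=
    le_trans (Polynomial.natDegree_le_of_dvd hdvdP hPne) hdegP
  have hdr : (minpoly K x).natDegree ∣ r := hdim ▸ minpoly.degree_dvd hint
  have hdf : (minpoly K x).natDegree ∣ w.factorial :=
    Nat.dvd_factorial (minpoly.natDegree_pos hint) hdle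
  have hd1 : (minpoly K x).natDegree = 1 :=
    Nat.eq_one_of_dvd_one (hw2 ▸ Nat.dvd_gcd hdr hdf)
  exact hxnot (minpoly.natDegree_eq_one_iff.mp hd1)
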